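/- arXiv:2203.13747 — 4 statements merged into one kernel-verified Lean document; each statement's English description precedes it below -/
import Mathlib

section
/- Let F be a finite field with |F| > 3 and let K be a field equipped with an embedding of F into K. Regard SL₂(F) and GL₂(F) as subgroups of GL₂(K) via entrywise application of the embedding, and let Z denote the subgroup of nonzero scalar matrices in GL₂(K). Let G be a subgroup of GL₂(K) with SL₂(F) ⊆ G ⊆ Z·GL₂(F), and let N be a normal subgroup of G that is not contained in Z. Then SL₂(F) ⊆ N. -/
open Matrix
namespace Stmt2Aux
variable {F : Type*} [Field F]

def IsSc (A : Matrix (Fin 2) (Fin 2) F) : Prop :=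
  A 0 1 = 0 ∧ A 1 0 = 0 ∧ A 0 0 = A 1 1

abbrev SL2 (F : Type*) [Field F] := Matrix.SpecialLinearGroup (Fin 2) F

def um (x : F) : SL2 F := ⟨!![1, x; 0, 1], by simp [Matrix.det_fin_two_of]⟩
def lm (x : F) : SL2 F := ⟨!![1, 0; x, 1], by simp [Matrix.det_fin_two_of]⟩
def wm : SL2 F := ⟨!![0, -1; 1, 0], by simp [Matrix.det_fin_two_of]⟩
def dg (t : F) (h : t ≠ 0) : SL2 F :=
  ⟨!![t, 0; 0, t⁻¹], by simp [Matrix.det_fin_two_of]; field_simp⟩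

@[simp] lemma um_val (x : F) : (um x).val = !![1, x; 0, 1] := rfl
@[simp] lemma lm_val (x : F) : (lm x).val = !![1, 0; x, 1] := rfl

lemma um_inv (x : F) : (um x)⁻¹ = um (-x) := by
  ext i j; rw [Matrix.SpecialLinearGroup.coe_inv]; simp [adjugate_fin_two]

lemma um_mul (x y : F) : um x * um y = um (x + y) := by
  ext i j
  simp only [Matrix.SpecialLinearGroup.coe_mul, um_val, Matrix.mul_fin_two]
  fin_cases i <;> fin_cases j
  all_goals (try simp)
  all_goals ring

lemma um_zero : um (0 : F) = 1 := by
  ext i j; simp [Matrix.one_fin_two]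

lemma sq_diff [Fintype F] (z : F) : ∃ p q : F, p ^ 2 - q ^ 2 = z := by
  by_cases h2 : (2 : F) = 0
  · have hinj : Function.Injective (fun x : F => x ^ 2) := by
      intro x y hxy
      simp only at hxy
      have h : (x - y) ^ 2 = 0 := by linear_combination hxy - (x*y - y*y) * h2
      have := pow_eq_zero_iff (n := 2) (by norm_num) |>.mp h
      exact sub_eq_zero.mp this
    obtain ⟨p, hp⟩ := Finite.injective_iff_surjective.mp hinj z
    exact ⟨p, 0, by simpa using hp⟩
  · exact ⟨(z + 1) / 2, (z - 1) / 2, by field_simp; ring⟩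

lemma exists_t [Fintype F] (hF : 3 < Fintype.card F) : ∃ t : F, t ≠ 0 ∧ t ^ 2 ≠ 1 := by
  classical
  by_contra h
  push_neg at h
  have hsub : (Finset.univ : Finset F) ⊆ {0, 1, -1} := by
    intro t _
    by_cases ht : t = 0
    · simp [ht]
    · have ht2 := h t ht
      have h12 : (t - 1) * (t + 1) = 0 := by linear_combination ht2
      rcases mul_eq_zero.mp h12 with h' | h'
      · have : t = 1 := by linear_combination h'
        simp [this]
      · have : t = -1 := by linear_combination h'
        simp [this]
  have hle := Finset.card_le_card hsub
  have h3 : ({0, 1, -1} : Finset F).card ≤ 3 := by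
    calc ({0, 1, -1} : Finset F).card ≤ ({1, -1} : Finset F).card + 1 :=
          Finset.card_insert_le _ _
      _ ≤ ({-1} : Finset F).card + 1 + 1 := by
          gcongr
          exact Finset.card_insert_le _ _
      _ = 3 := by simp
  rw [Finset.card_univ] at hle
  omega

variable [Fintype F]

lemma core1b (Q : Subgroup (SL2 F))
    (hconj : ∀ s x : SL2 F, x ∈ Q → s * x * s⁻¹ ∈ Q)
    {β : F} (hβ : β ≠ 0) (hu : um β ∈ Q) : ∀ x : F, um x ∈ Q := by
  have hsq : ∀ s : F, um (s ^ 2 * β) ∈ Q := by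
    intro s
    by_cases hs : s = 0
    · simpa [hs, um_zero] using Q.one_mem
    · have hmem := hconj (dg s hs) _ hu
      have he : dg s hs * um β * (dg s hs)⁻¹ = um (s ^ 2 * β) := by
        ext i j
        rw [Matrix.SpecialLinearGroup.coe_mul, Matrix.SpecialLinearGroup.coe_mul,
          Matrix.SpecialLinearGroup.coe_inv]
        simp only [dg, um_val, adjugate_fin_two, Matrix.mul_fin_two]
        fin_cases i <;> fin_cases j <;> simp [hs] <;> ring
      rwa [he] at hmem
  intro x
  obtain ⟨p, q, hpq⟩ := sq_diff (x / β)
  have hx : p ^ 2 * β + -(q ^ 2 * β) = x := by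
    have : (p ^ 2 - q ^ 2) * β = x := by rw [hpq]; field_simp
    linear_combination this
  have := Q.mul_mem (hsq p) (Q.inv_mem (hsq q))
  rwa [um_inv, um_mul, hx] at this

lemma caseUT (Q : Subgroup (SL2 F))
    (hconj : ∀ s x : SL2 F, x ∈ Q → s * x * s⁻¹ ∈ Q)
    (M : SL2 F) (hM : M ∈ Q) (h10 : M.val 1 0 = 0)
    (hns : M.val 0 1 ≠ 0 ∨ M.val 0 0 ≠ M.val 1 1) : ∀ x : F, um x ∈ Q := by
  set a := M.val 0 0 with ha
  set b := M.val 0 1 with hb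
  set d := M.val 1 1 with hd
  have hdet : a * d = 1 := by
    have := M.prop
    rw [Matrix.det_fin_two] at this
    rw [ha, hd]; linear_combination this + b * h10
  have hMval : M.val = !![a, b; 0, d] := by
    conv_lhs => rw [eta_fin_two M.val]
    rw [h10]
  clear_value a b d
  by_cases had : a = d
  · have hb0 : b ≠ 0 := by
      rcases hns with h | h
      · exact h
      · exact absurd had h
    have haa : a * a = 1 := by rw [had] at hdet ⊢; exact hdet
    have hMM : M * M = um (2 * (a * b)) := by
      ext i j
      rw [Matrix.SpecialLinearGroup.coe_mul, hMval]
      simp only [um_val, Matrix.mul_fin_two]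
      fin_cases i <;> fin_cases j
      all_goals (try simp)
      all_goals
        first
          | linear_combination haa
          | linear_combination (-b) * had
          | linear_combination haa - (a + d) * had
    by_cases h2 : (2 : F) = 0
    · have ha1 : a = 1 := by
        have h : (a - 1) ^ 2 = 0 := by linear_combination haa - (a - 1) * h2
        have := pow_eq_zero_iff (n := 2) (by norm_num) |>.mp h
        linear_combination this
      have hMu : M = um b := Subtype.ext (by rw [hMval, ← had, ha1]; rfl)
      exact core1b Q hconj hb0 (hMu ▸ hM)
    · have hβ : 2 * (a * b) ≠ 0 := by
        have ha0 : a ≠ 0 := by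
          intro h0
          rw [h0] at haa
          norm_num at haa
        exact mul_ne_zero h2 (mul_ne_zero ha0 hb0)
      exact core1b Q hconj hβ (hMM ▸ Q.mul_mem hM hM)
  · have haa : a * a - 1 ≠ 0 := by
      intro h
      have ha0 : a ≠ 0 := by
        intro h0; rw [h0] at hdet; simp at hdet
      apply had
      have : a * (a - d) = 0 := by linear_combination h - hdet
      rcases mul_eq_zero.mp this with h' | h'
      · exact absurd h' ha0
      · exact sub_eq_zero.mp h'
    intro y
    set x := y / (a * a - 1) with hxdef
    have hcj : M * um x * M⁻¹ = um (a * a * x) := by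
      ext i j
      rw [Matrix.SpecialLinearGroup.coe_mul, Matrix.SpecialLinearGroup.coe_mul,
        Matrix.SpecialLinearGroup.coe_inv, hMval]
      simp only [um_val, adjugate_fin_two, Matrix.mul_fin_two]
      fin_cases i <;> fin_cases j
      all_goals (try simp)
      all_goals
        first
          | ring1
          | linear_combination hdet
          | linear_combination x * hdet
          | linear_combination b * hdet
    have hmem : M * (um x * M * (um x)⁻¹)⁻¹ ∈ Q :=
      Q.mul_mem hM (Q.inv_mem (hconj (um x) M hM))
    have hre : M * (um x * M * (um x)⁻¹)⁻¹ = M * um x * M⁻¹ * (um x)⁻¹ := by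
      group
    rw [hre, hcj, um_inv, um_mul] at hmem
    have : a * a * x + -x = y := by
      have : (a * a - 1) * x = y := by rw [hxdef]; exact mul_div_cancel₀ y haa
      linear_combination this
    rwa [this] at hmem


-- reopen namespace/section context is still active? (file continues)
def km (c x : F) : SL2 F :=
  ⟨!![1, -x; -(c ^ 2 * x), 1 + c ^ 2 * x ^ 2], by rw [Matrix.det_fin_two_of]; ring⟩

@[simp] lemma km_val (c x : F) :
    (km c x).val = !![1, -x; -(c ^ 2 * x), 1 + c ^ 2 * x ^ 2] := rfl

lemma case2core (Q : Subgroup (SL2 F))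
    (hconj : ∀ s x : SL2 F, x ∈ Q → s * x * s⁻¹ ∈ Q)
    (M' : SL2 F) (hM'Q : M' ∈ Q) {b c d : F}
    (hval : M'.val = !![0, b; c, d]) : ∀ x : F, km c x ∈ Q := by
  have hbc : b * c = -1 := by
    have := M'.prop
    rw [hval, Matrix.det_fin_two_of] at this
    linear_combination -this
  intro x
  have hmem : M' * (um x * M' * (um x)⁻¹)⁻¹ ∈ Q :=
    Q.mul_mem hM'Q (Q.inv_mem (hconj (um x) M' hM'Q))
  have hre : M' * (um x * M' * (um x)⁻¹)⁻¹ = M' * um x * M'⁻¹ * (um x)⁻¹ := by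
    group
  have he : M' * um x * M'⁻¹ * (um x)⁻¹ = km c x := by
    rw [um_inv]
    ext i j
    rw [Matrix.SpecialLinearGroup.coe_mul, Matrix.SpecialLinearGroup.coe_mul,
      Matrix.SpecialLinearGroup.coe_mul, Matrix.SpecialLinearGroup.coe_inv, hval]
    simp only [um_val, km_val, adjugate_fin_two, Matrix.mul_fin_two]
    fin_cases i <;> fin_cases j
    all_goals (try simp)
    all_goals
      first
        | ring1
        | linear_combination hbc
        | linear_combination (-1 : F) * hbc
        | linear_combination x * hbc
        | linear_combination (-x) * hbc
        | linear_combination (x * c ^ 2 * x) * hbc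
        | linear_combination (-(x * c ^ 2 * x)) * hbc
        | linear_combination (d * x) * hbc
        | linear_combination (-(d * x)) * hbc
  rw [hre, he] at hmem
  exact hmem

lemma conj_form (M : SL2 F) (hc : M.val 1 0 ≠ 0) :
    ∃ b d : F, (um (-(M.val 0 0) / M.val 1 0) * M *
      (um (-(M.val 0 0) / M.val 1 0))⁻¹).val = !![0, b; M.val 1 0, d] := by
  set s := -(M.val 0 0) / M.val 1 0 with hs
  refine ⟨M.val 0 1 + s * M.val 1 1, M.val 1 1 - s * M.val 1 0, ?_⟩
  rw [um_inv, Matrix.SpecialLinearGroup.coe_mul, Matrix.SpecialLinearGroup.coe_mul]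
  conv_lhs => rw [eta_fin_two M.val]
  ext i j
  simp only [um_val, Matrix.mul_fin_two]
  fin_cases i <;> fin_cases j
  all_goals (try simp)
  all_goals (rw [hs]; field_simp; try ring; try simp)

lemma case2 (hF : 3 < Fintype.card F) (Q : Subgroup (SL2 F))
    (hconj : ∀ s x : SL2 F, x ∈ Q → s * x * s⁻¹ ∈ Q)
    (M : SL2 F) (hM : M ∈ Q) (hc : M.val 1 0 ≠ 0) : ∀ x : F, um x ∈ Q := by
  obtain ⟨b, d, hval⟩ := conj_form M hc
  have hM'Q : um (-(M.val 0 0) / M.val 1 0) * M *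
      (um (-(M.val 0 0) / M.val 1 0))⁻¹ ∈ Q := hconj _ _ hM
  have hK := case2core Q hconj _ hM'Q hval
  obtain ⟨t, ht0, ht1⟩ := exists_t hF
  have hP : km (M.val 1 0) (1 / (M.val 1 0 * t)) *
      (km (M.val 1 0) (t / M.val 1 0))⁻¹ ∈ Q :=
    Q.mul_mem (hK _) (Q.inv_mem (hK _))
  refine caseUT Q hconj _ hP ?_ (Or.inl ?_)
  · rw [Matrix.SpecialLinearGroup.coe_mul, Matrix.SpecialLinearGroup.coe_inv, km_val, km_val,
      adjugate_fin_two]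
    simp only [Matrix.mul_fin_two]
    try simp
    field_simp
    ring
  · rw [Matrix.SpecialLinearGroup.coe_mul, Matrix.SpecialLinearGroup.coe_inv, km_val, km_val,
      adjugate_fin_two]
    simp only [Matrix.mul_fin_two]
    try simp
    intro h
    apply ht1
    field_simp at h
    rcases mul_eq_zero.mp (show (M.val 1 0) * (t ^ 2 - 1) = 0 by linear_combination (M.val 1 0) * h)
      with h' | h'
    · exact absurd h' hc
    · linear_combination h'

lemma lm_mem (Q : Subgroup (SL2 F))
    (hconj : ∀ s x : SL2 F, x ∈ Q → s * x * s⁻¹ ∈ Q)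
    (hu : ∀ x : F, um x ∈ Q) : ∀ x : F, lm x ∈ Q := by
  intro x
  have hmem := hconj wm _ (hu (-x))
  have he : wm * um (-x) * wm⁻¹ = lm x := by
    ext i j
    rw [Matrix.SpecialLinearGroup.coe_mul, Matrix.SpecialLinearGroup.coe_mul,
      Matrix.SpecialLinearGroup.coe_inv]
    simp only [wm, um_val, lm_val, adjugate_fin_two, Matrix.mul_fin_two]
    fin_cases i <;> fin_cases j
    all_goals (try simp)
    all_goals ring1
  rwa [he] at hmem

lemma gen_ne (Q : Subgroup (SL2 F))
    (hu : ∀ x : F, um x ∈ Q) (hl : ∀ x : F, lm x ∈ Q)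
    (g : SL2 F) (hc : g.val 1 0 ≠ 0) : g ∈ Q := by
  have hdet := g.prop
  rw [Matrix.det_fin_two] at hdet
  have he : g = um ((g.val 0 0 - 1) / g.val 1 0) * lm (g.val 1 0) *
      um ((g.val 1 1 - 1) / g.val 1 0) := by
    ext i j
    rw [Matrix.SpecialLinearGroup.coe_mul, Matrix.SpecialLinearGroup.coe_mul]
    conv_lhs => rw [eta_fin_two g.val]
    simp only [um_val, lm_val, Matrix.mul_fin_two]
    fin_cases i <;> fin_cases j
    all_goals (try simp)
    all_goals field_simp
    all_goals
      first
        | ring1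
        | linear_combination hdet
        | linear_combination (g.val 1 1 - 1) * hdet
        | linear_combination g.val 1 1 * hdet
        | linear_combination (1 - g.val 1 1) * hdet
        | linear_combination (-1 : F) * hdet
  rw [he]
  exact Q.mul_mem (Q.mul_mem (hu _) (hl _)) (hu _)

lemma gen_all (Q : Subgroup (SL2 F))
    (hu : ∀ x : F, um x ∈ Q) (hl : ∀ x : F, lm x ∈ Q)
    (g : SL2 F) : g ∈ Q := by
  by_cases hc : g.val 1 0 ≠ 0
  · exact gen_ne Q hu hl g hc
  · push_neg at hc
    have hdet := g.prop
    rw [Matrix.det_fin_two, hc] at hdet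
    have hd : g.val 1 1 ≠ 0 := by
      intro h0
      rw [h0] at hdet
      norm_num at hdet
    have hc' : (g * lm 1).val 1 0 ≠ 0 := by
      rw [Matrix.SpecialLinearGroup.coe_mul]
      conv_lhs => rw [eta_fin_two g.val]
      simp only [lm_val, Matrix.mul_fin_two]
      simpa [hc] using hd
    have hmem := gen_ne Q hu hl (g * lm 1) hc'
    have he : g = g * lm 1 * (lm 1)⁻¹ := by group
    rw [he]
    exact Q.mul_mem hmem (Q.inv_mem (hl 1))

lemma sl_norm (hF : 3 < Fintype.card F) (Q : Subgroup (SL2 F))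
    (hconj : ∀ s x : SL2 F, x ∈ Q → s * x * s⁻¹ ∈ Q)
    (M : SL2 F) (hM : M ∈ Q) (hns : ¬ IsSc M.val) (g : SL2 F) : g ∈ Q := by
  have hu : ∀ x : F, um x ∈ Q := by
    by_cases hc : M.val 1 0 = 0
    · refine caseUT Q hconj M hM hc ?_
      by_contra hcon
      push_neg at hcon
      exact hns ⟨hcon.1, hc, hcon.2⟩
    · exact case2 hF Q hconj M hM hc
  exact gen_all Q hu (lm_mem Q hconj hu) g

omit [Fintype F] in
lemma unit_entries (A : (Matrix (Fin 2) (Fin 2) F)ˣ)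
    (ha : A.val 0 0 = 0) (hg : A.val 1 0 = 0) : False := by
  have hdet := (Matrix.isUnit_iff_isUnit_det _).mp A.isUnit
  rw [Matrix.det_fin_two, ha, hg] at hdet
  simp at hdet

omit [Fintype F] in
lemma comm_sc_ut (A : (Matrix (Fin 2) (Fin 2) F)ˣ)
    (h : IsSc ((um 1).val * A.val * ((um 1)⁻¹ : SL2 F).val *
      ((A⁻¹ : (Matrix (Fin 2) (Fin 2) F)ˣ) : Matrix (Fin 2) (Fin 2) F))) :
    A.val 1 0 = 0 ∧ A.val 0 0 = A.val 1 1 := by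
  obtain ⟨h01, h10, hdg⟩ := h
  set C : Matrix (Fin 2) (Fin 2) F :=
    (um 1).val * A.val * ((um 1)⁻¹ : SL2 F).val *
      ((A⁻¹ : (Matrix (Fin 2) (Fin 2) F)ˣ) : Matrix (Fin 2) (Fin 2) F) with hC
  have hCval : C = !![C 0 0, 0; 0, C 0 0] := by
    conv_lhs => rw [eta_fin_two C]
    rw [h01, h10, ← hdg]
  have hE : C * A.val = (um 1).val * A.val * ((um 1)⁻¹ : SL2 F).val := by
    rw [hC, mul_assoc _ _ A.val,
      show ((A⁻¹ : (Matrix (Fin 2) (Fin 2) F)ˣ) : Matrix (Fin 2) (Fin 2) F) * A.val = 1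
        from A.inv_mul, mul_one]
  rw [hCval, um_inv] at hE
  simp only [um_val] at hE
  set r := C 0 0 with hr
  set a := A.val 0 0 with ha'
  set b := A.val 0 1 with hb'
  set g := A.val 1 0 with hg'
  set hh := A.val 1 1 with hh'
  have hAval : A.val = !![a, b; g, hh] := by
    rw [ha', hb', hg', hh']; exact eta_fin_two A.val
  rw [hAval] at hE
  clear_value r a b g hh
  simp only [Matrix.mul_fin_two] at hE
  have e00 := congrFun (congrFun hE 0) 0
  have e01 := congrFun (congrFun hE 0) 1
  have e10 := congrFun (congrFun hE 1) 0
  simp at e00 e01 e10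
  by_cases hrr : r = 1
  · rw [hrr] at e00 e01
    have hg0 : g = 0 := by linear_combination -e00
    refine ⟨hg0, ?_⟩
    linear_combination e01 - hg0
  · exfalso
    have hg0 : g = 0 := by
      rcases mul_eq_zero.mp (show (r - 1) * g = 0 by linear_combination e10) with h' | h'
      · exact absurd (by linear_combination h') hrr
      · exact h'
    have ha0 : a = 0 := by
      rcases mul_eq_zero.mp (show (r - 1) * a = 0 by linear_combination e00 + hg0)
        with h' | h'
      · exact absurd (by linear_combination h') hrr
      · exact h'
    exact unit_entries A (by rw [← ha']; exact ha0) (by rw [← hg']; exact hg0)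

omit [Fintype F] in
lemma comm_sc_lt (A : (Matrix (Fin 2) (Fin 2) F)ˣ)
    (h : IsSc ((lm 1).val * A.val * ((lm 1)⁻¹ : SL2 F).val *
      ((A⁻¹ : (Matrix (Fin 2) (Fin 2) F)ˣ) : Matrix (Fin 2) (Fin 2) F))) :
    A.val 0 1 = 0 ∧ A.val 0 0 = A.val 1 1 := by
  obtain ⟨h01, h10, hdg⟩ := h
  set C : Matrix (Fin 2) (Fin 2) F :=
    (lm 1).val * A.val * ((lm 1)⁻¹ : SL2 F).val *
      ((A⁻¹ : (Matrix (Fin 2) (Fin 2) F)ˣ) : Matrix (Fin 2) (Fin 2) F) with hC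
  have hCval : C = !![C 0 0, 0; 0, C 0 0] := by
    conv_lhs => rw [eta_fin_two C]
    rw [h01, h10, ← hdg]
  have hE : C * A.val = (lm 1).val * A.val * ((lm 1)⁻¹ : SL2 F).val := by
    rw [hC, mul_assoc _ _ A.val,
      show ((A⁻¹ : (Matrix (Fin 2) (Fin 2) F)ˣ) : Matrix (Fin 2) (Fin 2) F) * A.val = 1
        from A.inv_mul, mul_one]
  have hlminv : ((lm 1)⁻¹ : SL2 F) = lm (-1) := by
    ext i j; rw [Matrix.SpecialLinearGroup.coe_inv]; simp [adjugate_fin_two]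
  rw [hCval, hlminv] at hE
  simp only [lm_val] at hE
  set r := C 0 0 with hr
  set a := A.val 0 0 with ha'
  set b := A.val 0 1 with hb'
  set g := A.val 1 0 with hg'
  set hh := A.val 1 1 with hh'
  have hAval : A.val = !![a, b; g, hh] := by
    rw [ha', hb', hg', hh']; exact eta_fin_two A.val
  rw [hAval] at hE
  clear_value r a b g hh
  simp only [Matrix.mul_fin_two] at hE
  have e01 := congrFun (congrFun hE 0) 1
  have e10 := congrFun (congrFun hE 1) 0
  have e11 := congrFun (congrFun hE 1) 1
  simp at e01 e10 e11
  by_cases hrr : r = 1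
  · rw [hrr] at e01 e10 e11
    have hb0 : b = 0 := by linear_combination -e11
    refine ⟨hb0, ?_⟩
    linear_combination -e10 + hb0
  · exfalso
    have hb0 : b = 0 := by
      rcases mul_eq_zero.mp (show (r - 1) * b = 0 by linear_combination e01) with h' | h'
      · exact absurd (by linear_combination h') hrr
      · exact h'
    have hh0 : hh = 0 := by
      rcases mul_eq_zero.mp (show (r - 1) * hh = 0 by linear_combination e11 + hb0)
        with h' | h'
      · exact absurd (by linear_combination h') hrr
      · exact h'
    -- det = a*hh - b*g = 0, contradiction with unit
    have hdet := (Matrix.isUnit_iff_isUnit_det _).mp A.isUnit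
    rw [Matrix.det_fin_two, ← hb', ← hh', hb0, hh0] at hdet
    simp at hdet

omit [Fintype F] in
lemma pick_s (A : (Matrix (Fin 2) (Fin 2) F)ˣ) (hns : ¬ IsSc A.val) :
    ∃ s : SL2 F, ¬ IsSc (s.val * A.val * ((s⁻¹ : SL2 F)).val *
      ((A⁻¹ : (Matrix (Fin 2) (Fin 2) F)ˣ) : Matrix (Fin 2) (Fin 2) F)) := by
  by_contra hcon
  push_neg at hcon
  obtain ⟨hg0, hd1⟩ := comm_sc_ut A (hcon (um 1))
  obtain ⟨hb0, hd2⟩ := comm_sc_lt A (hcon (lm 1))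
  exact hns ⟨hb0, hg0, hd1⟩

end Stmt2Aux

open Stmt2Aux

/-- Let `F` be a finite field with more than `3` elements and `K` a field with an
embedding `f : F → K`.  View `SL₂(F)` and `GL₂(F)` as subgroups of `GL₂(K)` via
entrywise application of `f`, and let `Z ≤ GL₂(K)` be the subgroup of nonzero scalar
matrices.  If `G` is a subgroup of `GL₂(K)` with `SL₂(F) ⊆ G ⊆ Z·GL₂(F)`, and `N` is a
normal subgroup of `G` not contained in `Z`, then `SL₂(F) ⊆ N`. -/
theorem stmt2 {F K : Type*} [Field F] [Fintype F] [Field K]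
    (hF : 3 < Fintype.card F) (f : F →+* K)
    (SLF GLF Z : Subgroup (GL (Fin 2) K))
    (hSLF : SLF = (Matrix.SpecialLinearGroup.toGL.comp
      (Matrix.SpecialLinearGroup.map (n := Fin 2) f)).range)
    (hGLF : GLF = (Units.map
      (f.mapMatrix : Matrix (Fin 2) (Fin 2) F →+* Matrix (Fin 2) (Fin 2) K).toMonoidHom).range)
    (hZ : Z = (Units.map
      (algebraMap K (Matrix (Fin 2) (Fin 2) K)).toMonoidHom).range)
    (G N : Subgroup (GL (Fin 2) K))
    (hSG : SLF ≤ G)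
    (hGZ : ∀ g ∈ G, ∃ z ∈ Z, ∃ a ∈ GLF, g = z * a)
    (hNG : N ≤ G)
    (hNnormal : ∀ g ∈ G, ∀ x ∈ N, g * x * g⁻¹ ∈ N)
    (hNZ : ¬ N ≤ Z) :
    SLF ≤ N := by
  intro x hx
  rw [hSLF] at hx
  obtain ⟨m, rfl⟩ := hx
  set ι : Matrix.SpecialLinearGroup (Fin 2) F →* GL (Fin 2) K :=
    Matrix.SpecialLinearGroup.toGL.comp (Matrix.SpecialLinearGroup.map (n := Fin 2) f)
    with hιdef
  have hιval : ∀ y : SL2 F, (ι y).val = f.mapMatrix y.val := fun y => rfl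
  have hιG : ∀ s : SL2 F, ι s ∈ G := by
    intro s
    apply hSG
    rw [hSLF]
    exact ⟨s, rfl⟩
  set Q : Subgroup (SL2 F) := N.comap ι with hQdef
  have hconj : ∀ s y : SL2 F, y ∈ Q → s * y * s⁻¹ ∈ Q := by
    intro s y hy
    have h := hNnormal (ι s) (hιG s) (ι y) (Subgroup.mem_comap.mp hy)
    rw [hQdef, Subgroup.mem_comap, _root_.map_mul, _root_.map_mul, _root_.map_inv]
    exact h
  have hex : ∃ n ∈ N, n ∉ Z := by
    by_contra hcon
    push_neg at hcon
    exact hNZ fun y hy => hcon y hy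
  obtain ⟨n, hnN, hnZ2⟩ := hex
  obtain ⟨z, hzZ, a, haGL, hn⟩ := hGZ n (hNG hnN)
  rw [hGLF] at haGL
  obtain ⟨A, rfl⟩ := haGL
  rw [hZ] at hzZ
  obtain ⟨kz, rfl⟩ := hzZ
  set zu : GL (Fin 2) K :=
    Units.map (algebraMap K (Matrix (Fin 2) (Fin 2) K)).toMonoidHom kz with hzu
  set wA : GL (Fin 2) K :=
    Units.map (f.mapMatrix : Matrix (Fin 2) (Fin 2) F →+*
      Matrix (Fin 2) (Fin 2) K).toMonoidHom A with hwA
  have hfinj : Function.Injective f := f.injective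
  -- A is nonscalar
  have hAns : ¬ IsSc (A : Matrix (Fin 2) (Fin 2) F) := by
    rintro ⟨h01, h10, hdg⟩
    apply hnZ2
    rw [hZ]
    have hμ : (A : Matrix (Fin 2) (Fin 2) F) 0 0 ≠ 0 := fun h0 => unit_entries A h0 h10
    have hfμ : f ((A : Matrix (Fin 2) (Fin 2) F) 0 0) ≠ 0 := fun h0 =>
      hμ (hfinj (by rw [h0, map_zero]))
    refine ⟨kz * Units.mk0 _ hfμ, ?_⟩
    rw [hn]
    apply Units.ext
    have hAsc : (f.mapMatrix (A : Matrix (Fin 2) (Fin 2) F)) =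
        algebraMap K (Matrix (Fin 2) (Fin 2) K) (f ((A : Matrix (Fin 2) (Fin 2) F) 0 0)) := by
      ext i j
      rw [Matrix.algebraMap_matrix_apply, RingHom.mapMatrix_apply, Matrix.map_apply]
      fin_cases i <;> fin_cases j
      · simp
      · simp [h01]
      · simp [h10]
      · simp [← hdg]
    show algebraMap K (Matrix (Fin 2) (Fin 2) K)
        ((kz : K) * f ((A : Matrix (Fin 2) (Fin 2) F) 0 0)) = _
    rw [_root_.map_mul, ← hAsc]
    rfl
  obtain ⟨s, hsns⟩ := pick_s A hAns
  have hdetC : (s.val * (A : Matrix (Fin 2) (Fin 2) F) * ((s⁻¹ : SL2 F)).val *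
      ((A⁻¹ : (Matrix (Fin 2) (Fin 2) F)ˣ) : Matrix (Fin 2) (Fin 2) F)).det = 1 := by
    rw [Matrix.det_mul, Matrix.det_mul, Matrix.det_mul, s.prop, (s⁻¹ : SL2 F).prop]
    have h1 : (A : Matrix (Fin 2) (Fin 2) F).det *
        ((A⁻¹ : (Matrix (Fin 2) (Fin 2) F)ˣ) : Matrix (Fin 2) (Fin 2) F).det = 1 := by
      rw [← Matrix.det_mul, A.mul_inv]
      exact Matrix.det_one
    rw [one_mul, mul_one]
    exact h1
  set CS : SL2 F := ⟨_, hdetC⟩ with hCSdef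
  -- centrality of zu
  have hcen : ∀ v : GL (Fin 2) K, zu * v = v * zu := by
    intro v
    apply Units.ext
    exact Algebra.commutes (kz : K) (v : Matrix (Fin 2) (Fin 2) K)
  have hX : ι s * n * (ι s)⁻¹ * n⁻¹ ∈ N :=
    N.mul_mem (hNnormal (ι s) (hιG s) n hnN) (N.inv_mem hnN)
  have hkey : ι s * n * (ι s)⁻¹ * n⁻¹ = ι s * wA * (ι s)⁻¹ * wA⁻¹ := by
    rw [hn]
    calc ι s * (zu * wA) * (ι s)⁻¹ * (zu * wA)⁻¹
        = (ι s * zu) * (wA * (ι s)⁻¹ * wA⁻¹) * zu⁻¹ := by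
          rw [_root_.mul_inv_rev]; group
      _ = (zu * ι s) * (wA * (ι s)⁻¹ * wA⁻¹) * zu⁻¹ := by
          rw [show ι s * zu = zu * ι s from (hcen (ι s)).symm]
      _ = zu * (ι s * wA * (ι s)⁻¹ * wA⁻¹) * zu⁻¹ := by group
      _ = (ι s * wA * (ι s)⁻¹ * wA⁻¹) * zu * zu⁻¹ := by
          rw [hcen (ι s * wA * (ι s)⁻¹ * wA⁻¹)]
      _ = ι s * wA * (ι s)⁻¹ * wA⁻¹ := by group
  have hιCS : ι CS = ι s * wA * (ι s)⁻¹ * wA⁻¹ := by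
    rw [show (ι s)⁻¹ = ι s⁻¹ from (_root_.map_inv ι s).symm,
      show wA⁻¹ = Units.map (f.mapMatrix : Matrix (Fin 2) (Fin 2) F →+*
        Matrix (Fin 2) (Fin 2) K).toMonoidHom A⁻¹ from (_root_.map_inv _ A).symm]
    apply Units.ext
    show f.mapMatrix ((CS : SL2 F) : Matrix (Fin 2) (Fin 2) F) = _
    rw [show ((CS : SL2 F) : Matrix (Fin 2) (Fin 2) F) =
      s.val * (A : Matrix (Fin 2) (Fin 2) F) * ((s⁻¹ : SL2 F)).val *
        ((A⁻¹ : (Matrix (Fin 2) (Fin 2) F)ˣ) : Matrix (Fin 2) (Fin 2) F) from rfl]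
    simp only [_root_.map_mul]
    rfl
  have hCSQ : CS ∈ Q := by
    rw [hQdef, Subgroup.mem_comap, hιCS, ← hkey]
    exact hX
  exact Subgroup.mem_comap.mp (sl_norm hF Q hconj CS hCSQ hsns m)
end

section
/- Let p be a prime and q > 3 a power of p, let I be a nonempty finite set with a distinguished element i₀, let D be a subgroup of F_qˣ, and let H(F_q) := {(M_i)_{i∈I} ∈ ∏_{i∈I} GL₂(F_q) : there exists δ ∈ D with det M_i = δ for all i ∈ I}. Let L be a field of characteristic p together with an embedding ι : F_q ↪ L. Then for every group homomorphism χ : H(F_q) → Lˣ there exists a natural number k such that χ((M_i)_{i∈I}) = ι(det M_{i₀})^k for all (M_i)_{i∈I} ∈ H(F_q). -/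
/-- For a field `F` and a subgroup `D ≤ Fˣ`, the subgroup
`H(F) = {(M i)_{i ∈ I} ∈ ∏_{i ∈ I} GL₂(F) : ∃ δ ∈ D, ∀ i, det (M i) = δ}`
of tuples of invertible `2 × 2` matrices with common determinant belonging to `D`. -/
def commonDetSubgroup (I : Type*) {F : Type*} [Field F] (D : Subgroup Fˣ) :
    Subgroup (∀ _ : I, GL (Fin 2) F) where
  carrier := {M | ∃ δ ∈ D, ∀ i, Matrix.GeneralLinearGroup.det (M i) = δ}
  one_mem' := ⟨1, D.one_mem, fun _ => map_one _⟩
  mul_mem' := by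
    rintro a b ⟨δ, hδ, ha⟩ ⟨ε, hε, hb⟩
    exact ⟨δ * ε, D.mul_mem hδ hε, fun i => by
      simp only [Pi.mul_apply, map_mul, ha i, hb i]⟩
  inv_mem' := by
    rintro a ⟨δ, hδ, ha⟩
    exact ⟨δ⁻¹, D.inv_mem hδ, fun i => by
      simp only [Pi.inv_apply, map_inv, ha i]⟩

namespace Stmt3Aux

variable {F : Type*} [Field F]

lemma transvection_pow {n : Type*} [DecidableEq n] [Fintype n] {i j : n} (hij : i ≠ j)
    (c : F) (m : ℕ) :
    Matrix.transvection i j c ^ m = Matrix.transvection i j (m • c) := by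
  induction m with
  | zero => simp [Matrix.transvection_zero]
  | succ m ih =>
      rw [pow_succ, ih, Matrix.transvection_mul_transvection_same _ _ hij, succ_nsmul]

lemma transvection01 (c : F) : Matrix.transvection (0 : Fin 2) 1 c = !![1, c; 0, 1] := by
  ext i j
  fin_cases i <;> fin_cases j <;>
    simp [Matrix.transvection, Matrix.single, Matrix.one_apply]

lemma transvection10 (c : F) : Matrix.transvection (1 : Fin 2) 0 c = !![1, 0; c, 1] := by
  ext i j
  fin_cases i <;> fin_cases j <;>
    simp [Matrix.transvection, Matrix.single, Matrix.one_apply]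

lemma diag_fin_two (d : Fin 2 → F) : Matrix.diagonal d = !![d 0, 0; 0, d 1] := by
  ext i j
  fin_cases i <;> fin_cases j <;> simp

/-- diag(a, a⁻¹) as a product of six transvections. -/
lemma diag_eq_prod_transvection (a : F) (ha : a ≠ 0) :
    Matrix.transvection (0 : Fin 2) 1 a * Matrix.transvection (1 : Fin 2) 0 (-a⁻¹) *
      Matrix.transvection (0 : Fin 2) 1 a * Matrix.transvection (0 : Fin 2) 1 (-1) *
      Matrix.transvection (1 : Fin 2) 0 1 * Matrix.transvection (0 : Fin 2) 1 (-1) =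
      Matrix.diagonal ![a, a⁻¹] := by
  simp only [transvection01, transvection10, diag_fin_two, Matrix.mul_fin_two]
  ext i j
  fin_cases i <;> fin_cases j <;> simp <;> field_simp <;> ring


/-- Every `SL₂` matrix over a field is a product of transvections. -/
lemma exists_transvection_list (A : Matrix.SpecialLinearGroup (Fin 2) F) :
    ∃ L : List (Matrix.TransvectionStruct (Fin 2) F),
      (L.map Matrix.TransvectionStruct.toMatrix).prod = (A : Matrix (Fin 2) (Fin 2) F) := by
  obtain ⟨L, L', d, h⟩ :=
    Matrix.Pivot.exists_list_transvec_mul_diagonal_mul_list_transvec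
      (A : Matrix (Fin 2) (Fin 2) F)
  have hdet : d 0 * d 1 = 1 := by
    have := congrArg Matrix.det h
    rw [Matrix.det_mul, Matrix.det_mul, Matrix.TransvectionStruct.det_toMatrix_prod,
      Matrix.TransvectionStruct.det_toMatrix_prod, A.det_coe, Matrix.det_diagonal,
      Fin.prod_univ_two] at this
    simpa using this.symm
  have ha : d 0 ≠ 0 := left_ne_zero_of_mul_eq_one hdet
  have hd1 : d 1 = (d 0)⁻¹ := by
    field_simp
    linear_combination hdet
  set W : List (Matrix.TransvectionStruct (Fin 2) F) :=
    [⟨0, 1, by decide, d 0⟩, ⟨1, 0, by decide, -(d 0)⁻¹⟩, ⟨0, 1, by decide, d 0⟩,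
     ⟨0, 1, by decide, -1⟩, ⟨1, 0, by decide, 1⟩, ⟨0, 1, by decide, -1⟩] with hW
  have hWprod : (W.map Matrix.TransvectionStruct.toMatrix).prod = Matrix.diagonal d := by
    have h6 := diag_eq_prod_transvection (d 0) ha
    have hd : d = ![d 0, d 1] := by funext i; fin_cases i <;> simp
    rw [hW]
    simp only [List.map_cons, List.map_nil, List.prod_cons, List.prod_nil, mul_one,
      Matrix.TransvectionStruct.toMatrix_mk]
    rw [hd, hd1, ← h6]
    noncomm_ring
  refine ⟨L ++ W ++ L', ?_⟩
  simp only [List.map_append, List.prod_append, hWprod]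
  exact h.symm


/-- The coercion `SL₂ → Matrix` as a monoid hom. -/
def slCoeHom : Matrix.SpecialLinearGroup (Fin 2) F →* Matrix (Fin 2) (Fin 2) F where
  toFun A := (A : Matrix (Fin 2) (Fin 2) F)
  map_one' := rfl
  map_mul' _ _ := rfl

/-- A transvection as an element of `SL₂`. -/
def tSL (t : Matrix.TransvectionStruct (Fin 2) F) : Matrix.SpecialLinearGroup (Fin 2) F :=
  ⟨t.toMatrix, t.det⟩

/-- Any group hom from `SL₂(F)` to the units of a field of the same (positive)
characteristic is trivial. -/
lemma sl2_hom_trivial {p : ℕ} (hp : p.Prime) [CharP F p] {L : Type*} [Field L] [CharP L p]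
    (φ : Matrix.SpecialLinearGroup (Fin 2) F →* Lˣ) (A : Matrix.SpecialLinearGroup (Fin 2) F) :
    φ A = 1 := by
  haveI : Fact p.Prime := ⟨hp⟩
  have hfrob : ∀ u : Lˣ, u ^ p = 1 → u = 1 := by
    intro u hu
    have : (u : L) ^ p = (1 : L) ^ p := by
      rw [one_pow, ← Units.val_pow_eq_pow_val, hu, Units.val_one]
    exact Units.ext (frobenius_inj L p (by simpa [frobenius_def] using this))
  have key : ∀ t : Matrix.TransvectionStruct (Fin 2) F, φ (tSL t) = 1 := by
    intro t
    apply hfrob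
    rw [← map_pow]
    convert map_one φ
    apply Subtype.coe_injective
    show (t.toMatrix : Matrix (Fin 2) (Fin 2) F) ^ p = 1
    rw [Matrix.TransvectionStruct.toMatrix, transvection_pow t.hij, nsmul_eq_mul,
      CharP.cast_eq_zero F p, zero_mul, Matrix.transvection_zero]
  obtain ⟨Lst, hLst⟩ := exists_transvection_list A
  have hA : A = (Lst.map tSL).prod := by
    apply Subtype.coe_injective
    have := map_list_prod (slCoeHom (F := F)) (Lst.map tSL)
    rw [List.map_map] at this
    exact hLst.symm.trans this.symm
  rw [hA, map_list_prod]
  apply List.prod_eq_one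
  intro x hx
  simp only [List.map_map, List.mem_map] at hx
  obtain ⟨t, _, rfl⟩ := hx
  exact key t


/-- `δ ↦ diag(δ, 1)` as an element of `GL₂`. -/
def diagGL (δ : Fˣ) : GL (Fin 2) F :=
  ⟨Matrix.diagonal ![(δ : F), 1], Matrix.diagonal ![((δ⁻¹ : Fˣ) : F), 1],
    by
      rw [Matrix.diagonal_mul_diagonal]
      convert Matrix.diagonal_one using 2
      funext i; fin_cases i <;> simp,
    by
      rw [Matrix.diagonal_mul_diagonal]
      convert Matrix.diagonal_one using 2
      funext i; fin_cases i <;> simp⟩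

lemma diagGL_mul (δ ε : Fˣ) : diagGL (δ * ε) = diagGL δ * diagGL ε := by
  apply Units.ext
  show Matrix.diagonal ![((δ * ε : Fˣ) : F), 1]
      = Matrix.diagonal ![(δ : F), 1] * Matrix.diagonal ![(ε : F), 1]
  have hv : (![(δ : F), 1] : Fin 2 → F) * ![(ε : F), 1] = ![((δ * ε : Fˣ) : F), 1] := by
    funext i; fin_cases i <;> simp
  rw [Matrix.diagonal_mul_diagonal, show (fun i => (![(δ : F), 1] : Fin 2 → F) i * ![(ε : F), 1] i) = ![((δ * ε : Fˣ) : F), 1] from hv]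

/-- `δ ↦ diag(δ, 1)` as a monoid hom `Fˣ →* GL₂(F)`. -/
def diagGLHom : Fˣ →* GL (Fin 2) F where
  toFun := diagGL
  map_one' := by
    apply Units.ext
    show Matrix.diagonal ![((1 : Fˣ) : F), 1] = 1
    convert Matrix.diagonal_one using 2
    funext i; fin_cases i <;> simp
  map_mul' := diagGL_mul

lemma det_diagGL (δ : Fˣ) : Matrix.GeneralLinearGroup.det (diagGL δ) = δ := by
  apply Units.ext
  rw [Matrix.GeneralLinearGroup.val_det_apply]
  show (Matrix.diagonal ![(δ : F), 1]).det = (δ : F)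
  rw [Matrix.det_diagonal, Fin.prod_univ_two]
  simp


variable {I : Type*} [DecidableEq I] (D : Subgroup Fˣ)

/-- Embedding of `SL₂(F)` into `commonDetSubgroup I D` at coordinate `i`. -/
def embAt (i : I) : Matrix.SpecialLinearGroup (Fin 2) F →* commonDetSubgroup I D :=
  ((MonoidHom.mulSingle (fun _ : I => GL (Fin 2) F) i).comp
      Matrix.SpecialLinearGroup.toGL).codRestrict (commonDetSubgroup I D)
    (fun A => ⟨1, one_mem _, fun j => by
      by_cases h : j = i
      · subst h
        simp only [MonoidHom.comp_apply, MonoidHom.mulSingle_apply, Pi.mulSingle_eq_same]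
        exact Matrix.SpecialLinearGroup.coeToGL_det A
      · simp only [MonoidHom.comp_apply, MonoidHom.mulSingle_apply,
          Pi.mulSingle_eq_of_ne h]
        exact map_one _⟩)

/-- Constant-diagonal tuple hom `Fˣ →* ∏ GL₂(F)`. -/
def dTup : Fˣ →* (∀ _ : I, GL (Fin 2) F) where
  toFun δ := fun _ => diagGL δ
  map_one' := funext fun _ => diagGLHom.map_one'
  map_mul' δ ε := funext fun _ => diagGL_mul δ ε

/-- The hom `D →* commonDetSubgroup I D` sending `δ` to the constant diagonal tuple. -/
def dT : D →* commonDetSubgroup I D :=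
  ((dTup (I := I)).comp D.subtype).codRestrict (commonDetSubgroup I D)
    (fun δ => ⟨(δ : Fˣ), δ.2, fun _ => det_diagGL _⟩)


/-- `χ` is trivial on tuples all of whose determinants are `1`. -/
lemma chi_ker {p : ℕ} (hp : p.Prime) [CharP F p] {L : Type*} [Field L] [CharP L p]
    [Fintype I] (χ : commonDetSubgroup I D →* Lˣ) (N : commonDetSubgroup I D)
    (hN : ∀ i, Matrix.GeneralLinearGroup.det ((N : ∀ _ : I, GL (Fin 2) F) i) = 1) :
    χ N = 1 := by
  set A : ∀ _ : I, Matrix.SpecialLinearGroup (Fin 2) F := fun i =>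
    ⟨(((N : ∀ _ : I, GL (Fin 2) F) i : GL (Fin 2) F) : Matrix (Fin 2) (Fin 2) F), by
      have h := congrArg Units.val (hN i)
      rwa [Matrix.GeneralLinearGroup.val_det_apply, Units.val_one] at h⟩ with hA
  have hcomm : ((Finset.univ : Finset I) : Set I).Pairwise
      (Function.onFun Commute fun i => embAt D i (A i)) := by
    intro i _ j _ _
    have h : Commute
        (Pi.mulSingle (M := fun _ : I => GL (Fin 2) F) i
          (Matrix.SpecialLinearGroup.toGL (A i)))
        (Pi.mulSingle (M := fun _ : I => GL (Fin 2) F) j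
          (Matrix.SpecialLinearGroup.toGL (A j))) :=
      Pi.mulSingle_apply_commute
        (fun k : I => (Matrix.SpecialLinearGroup.toGL (A k) : GL (Fin 2) F)) i j
    exact Subtype.ext h
  have hNprod : N = Finset.univ.noncommProd (fun i => embAt D i (A i)) hcomm := by
    apply Subtype.coe_injective
    show ((N : commonDetSubgroup I D) : ∀ _ : I, GL (Fin 2) F)
        = (commonDetSubgroup I D).subtype
            (Finset.univ.noncommProd (fun i => embAt D i (A i)) hcomm)
    rw [Finset.map_noncommProd]
    have hsingle := Finset.noncommProd_mulSingle (M := fun _ : I => GL (Fin 2) F)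
      (N : ∀ _ : I, GL (Fin 2) F)
    refine Eq.symm (Eq.trans (Finset.noncommProd_congr rfl (fun i _ => ?_) _) hsingle)
    show (commonDetSubgroup I D).subtype (embAt D i (A i))
        = Pi.mulSingle (M := fun _ : I => GL (Fin 2) F) i ((N : ∀ _ : I, GL (Fin 2) F) i)
    have htoGL : Matrix.SpecialLinearGroup.toGL (A i)
        = (N : ∀ _ : I, GL (Fin 2) F) i := Units.ext rfl
    rw [← htoGL]
    rfl
  rw [hNprod, Finset.map_noncommProd]
  refine (Finset.noncommProd_eq_pow_card _ _ _ 1 fun i _ => ?_).trans (one_pow _)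
  exact sl2_hom_trivial hp (χ.comp (embAt D i)) (A i)

end Stmt3Aux

/-- Let `p` be a prime, `F` a finite field of characteristic `p` with more than `3`
elements (i.e. of cardinality a power `q > 3` of `p`), `I` a finite set with a
distinguished element `i₀`, `D ≤ Fˣ` a subgroup, and
`H(F) = {(M i) ∈ ∏ GL₂(F) : ∃ δ ∈ D, ∀ i, det (M i) = δ}`.  Let `L` be a field of
characteristic `p` with an embedding `ι : F → L`.  Then every group homomorphism
`χ : H(F) → Lˣ` is a power of the common determinant: there is `k : ℕ` with
`χ M = ι (det (M i₀)) ^ k` for all `M ∈ H(F)`. -/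
theorem stmt3 {p : ℕ} (hp : p.Prime) {F : Type*} [Field F] [Fintype F] [CharP F p]
    (hq : 3 < Fintype.card F)
    {I : Type*} [Fintype I] (i₀ : I) (D : Subgroup Fˣ)
    {L : Type*} [Field L] [CharP L p] (ι : F →+* L)
    (χ : commonDetSubgroup I D →* Lˣ) :
    ∃ k : ℕ, ∀ M : commonDetSubgroup I D,
      (χ M : L) =
        ι ((Matrix.GeneralLinearGroup.det ((M : ∀ _ : I, GL (Fin 2) F) i₀) : Fˣ) : F) ^ k := by
  classical
  obtain ⟨g, hg⟩ := IsCyclic.exists_generator (α := D)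
  set θ : D →* Lˣ := (Units.map ι.toMonoidHom).comp D.subtype with hθdef
  set ψ : D →* Lˣ := χ.comp (Stmt3Aux.dT D) with hψdef
  have hθinj : Function.Injective θ :=
    (Units.map_injective ι.injective).comp Subtype.coe_injective
  have hn0 : orderOf g ≠ 0 := (orderOf_pos g).ne'
  haveI : NeZero (orderOf g) := ⟨hn0⟩
  have hord : orderOf (θ g) = orderOf g := orderOf_injective θ hθinj g
  have hprim : IsPrimitiveRoot ((θ g : Lˣ) : L) (orderOf g) := by
    have h1 := IsPrimitiveRoot.orderOf (θ g)
    rw [hord] at h1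
    exact IsPrimitiveRoot.coe_units_iff.mpr h1
  have hψn : ((ψ g : Lˣ) : L) ^ orderOf g = 1 := by
    rw [← Units.val_pow_eq_pow_val, ← map_pow, pow_orderOf_eq_one, map_one, Units.val_one]
  obtain ⟨k, -, hk⟩ := hprim.eq_pow_of_pow_eq_one hψn
  have hku : (θ g) ^ k = ψ g := Units.ext (by rw [Units.val_pow_eq_pow_val]; exact hk)
  refine ⟨k, fun M => ?_⟩
  obtain ⟨δ, hδD, hdet⟩ := M.2
  set d : D := ⟨δ, hδD⟩ with hd
  have hMd : χ M = ψ d := by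
    have h1 : χ (M * (Stmt3Aux.dT D d)⁻¹) = 1 := by
      apply Stmt3Aux.chi_ker D hp χ
      intro i
      have : ((M * (Stmt3Aux.dT D d)⁻¹ : commonDetSubgroup I D) :
          ∀ _ : I, GL (Fin 2) F) i
          = (M : ∀ _ : I, GL (Fin 2) F) i * (Stmt3Aux.diagGL δ)⁻¹ := rfl
      rw [this, map_mul, map_inv, hdet i, Stmt3Aux.det_diagGL, mul_inv_cancel]
    calc χ M = χ (M * (Stmt3Aux.dT D d)⁻¹) * χ (Stmt3Aux.dT D d) := by
          rw [← map_mul, inv_mul_cancel_right]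
      _ = ψ d := by rw [h1, one_mul]; rfl
  obtain ⟨m, hm⟩ := Subgroup.mem_zpowers_iff.mp (hg d)
  have hfinal : χ M = (θ d) ^ k := by
    rw [hMd, ← hm, map_zpow, ← hku, ← zpow_natCast, ← zpow_mul, mul_comm, zpow_mul,
      zpow_natCast, ← map_zpow θ, hm]
  rw [hdet i₀, hfinal, Units.val_pow_eq_pow_val]
  rfl
end

section
/- Let p ≥ 2 be an integer and let h = l·k with l, k positive integers. Let c₀, …, c_{h−1} be natural numbers with c_i ≤ p−1 for all i, not all of them equal to p−1. Set M = Σ_{i=0}^{h−1} c_i p^i and D = Σ_{j=0}^{k−1} p^{j·l}. Then D divides M if and only if c_{(i+l) mod h} = c_i for all i; and when this holds, M = D · (Σ_{i=0}^{l−1} c_i p^i). -/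
open Finset

/-- geometric sum with digits p-1 -/
lemma aux_geom (p : ℕ) (hp : 1 ≤ p) (n : ℕ) :
    ∑ i ∈ range n, (p - 1) * p ^ i = p ^ n - 1 := by
  induction n with
  | zero => simp
  | succ n ih =>
    rw [sum_range_succ, ih]
    have hx : 1 ≤ p ^ n := Nat.one_le_pow _ _ (by omega)
    have h1 : (p - 1) * p ^ n = p * p ^ n - p ^ n := by
      rw [Nat.sub_mul, one_mul]
    have h2 : p ^ (n + 1) = p * p ^ n := by ring
    have h3 : p ^ n ≤ p * p ^ n := Nat.le_mul_of_pos_left _ (by omega)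
    omega

/-- strict bound when not all digits are p-1 -/
lemma aux_lt (p h : ℕ) (hp : 2 ≤ p) (c : ℕ → ℕ) (hc : ∀ i < h, c i ≤ p - 1)
    (hne : ∃ i < h, c i ≠ p - 1) :
    ∑ i ∈ range h, c i * p ^ i < p ^ h - 1 := by
  rw [← aux_geom p (by omega) h]
  obtain ⟨i0, hi0, hne0⟩ := hne
  refine Finset.sum_lt_sum (fun i hi => ?_) ⟨i0, Finset.mem_range.2 hi0, ?_⟩
  · exact Nat.mul_le_mul_right _ (hc i (mem_range.1 hi))
  · have := hc i0 hi0
    have hpow : 0 < p ^ i0 := Nat.pow_pos (by omega)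
    have : c i0 < p - 1 := by omega
    exact (Nat.mul_lt_mul_right hpow).2 this

/-- uniqueness of base-p digits -/
lemma aux_unique (p : ℕ) (hp : 2 ≤ p) :
    ∀ (h : ℕ) (a b : ℕ → ℕ), (∀ i < h, a i < p) → (∀ i < h, b i < p) →
      (∑ i ∈ range h, a i * p ^ i) = (∑ i ∈ range h, b i * p ^ i) →
      ∀ i < h, a i = b i := by
  intro h
  induction h with
  | zero => intro a b _ _ _ i hi; omega
  | succ n ih =>
    intro a b ha hb hsum i hi
    rw [Finset.sum_range_succ', Finset.sum_range_succ'] at hsum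
    simp only [pow_zero, mul_one] at hsum
    have hA : ∑ i ∈ range n, a (i + 1) * p ^ (i + 1)
        = p * ∑ i ∈ range n, a (i + 1) * p ^ i := by
      rw [Finset.mul_sum]; apply Finset.sum_congr rfl; intro j _; ring
    have hB : ∑ i ∈ range n, b (i + 1) * p ^ (i + 1)
        = p * ∑ i ∈ range n, b (i + 1) * p ^ i := by
      rw [Finset.mul_sum]; apply Finset.sum_congr rfl; intro j _; ring
    rw [hA, hB] at hsum
    have ha0 : a 0 < p := ha 0 (by omega)
    have hb0 : b 0 < p := hb 0 (by omega)
    have h0 : a 0 = b 0 := by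
      have := congrArg (· % p) hsum
      simpa [Nat.add_mul_mod_self_left, Nat.mul_add_mod, Nat.mod_eq_of_lt ha0,
        Nat.mod_eq_of_lt hb0] using this
    have hrest : ∑ i ∈ range n, a (i + 1) * p ^ i = ∑ i ∈ range n, b (i + 1) * p ^ i := by
      have hp0 : 0 < p := by omega
      have := hsum
      rw [h0] at this
      have h3 := Nat.add_right_cancel this
      exact Nat.eq_of_mul_eq_mul_left hp0 h3
    have := ih (fun i => a (i + 1)) (fun i => b (i + 1))
      (fun i hi => ha (i + 1) (by omega)) (fun i hi => hb (i + 1) (by omega)) hrest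
    rcases i with _ | j
    · exact h0
    · exact this j (by omega)

/-- cyclic shift reindexing of a sum -/
lemma aux_shift {β : Type*} [AddCommMonoid β] (h l : ℕ) (hl : l ≤ h) (f : ℕ → β) :
    ∑ i ∈ range h, f ((i + l) % h) = ∑ i ∈ range h, f i := by
  rcases Nat.eq_zero_or_pos h with rfl | hh
  · simp
  refine Finset.sum_nbij' (fun i => (i + l) % h) (fun j => (j + (h - l)) % h) ?_ ?_ ?_ ?_ ?_
  · intro i hi; exact mem_range.2 (Nat.mod_lt _ hh)
  · intro j hj; exact mem_range.2 (Nat.mod_lt _ hh)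
  · intro i hi
    show ((i + l) % h + (h - l)) % h = i
    rw [Nat.mod_add_mod]
    have e : i + l + (h - l) = i + h := by omega
    rw [e, Nat.add_mod_right, Nat.mod_eq_of_lt (mem_range.1 hi)]
  · intro j hj
    show ((j + (h - l)) % h + l) % h = j
    rw [Nat.mod_add_mod]
    have e : j + (h - l) + l = j + h := by omega
    rw [e, Nat.add_mod_right, Nat.mod_eq_of_lt (mem_range.1 hj)]
  · intro i hi; rfl

/-- the product formula under periodicity -/
lemma aux_prod (p l : ℕ) (c : ℕ → ℕ) :
    ∀ k : ℕ, (∀ j < k, ∀ i < l, c (j * l + i) = c i) →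
    ∑ i ∈ range (l * k), c i * p ^ i =
      (∑ j ∈ range k, p ^ (j * l)) * ∑ i ∈ range l, c i * p ^ i := by
  intro k
  induction k with
  | zero => simp
  | succ n ih =>
    intro hper
    have h1 : l * (n + 1) = l * n + l := by ring
    rw [h1, Finset.sum_range_add, Finset.sum_range_succ, add_mul,
      ih (fun j hj i hi => hper j (by omega) i hi)]
    congr 1
    rw [Finset.mul_sum]
    apply Finset.sum_congr rfl
    intro i hi
    rw [show l * n + i = n * l + i from by ring, hper n (by omega) i (mem_range.1 hi)]
    ring

/-- Let `p ≥ 2`, `h = l * k` with `l, k > 0`, and let `c 0, …, c (h-1)` be natural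
numbers `≤ p - 1`, not all equal to `p - 1`.  Set `M = ∑_{i<h} c i * p^i` and
`D = ∑_{j<k} p^(j*l)`.  Then `D ∣ M` iff the digit string is invariant under the
cyclic shift by `l`, i.e. `c ((i + l) % h) = c i` for all `i < h`; and in that case
`M = D * ∑_{i<l} c i * p^i`. -/
theorem stmt5 (p l k h : ℕ) (hp : 2 ≤ p) (hl : 0 < l) (hk : 0 < k) (hh : h = l * k)
    (c : ℕ → ℕ) (hc : ∀ i < h, c i ≤ p - 1) (hne : ∃ i < h, c i ≠ p - 1) :
    ((∑ j ∈ Finset.range k, p ^ (j * l)) ∣ (∑ i ∈ Finset.range h, c i * p ^ i) ↔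
      ∀ i < h, c ((i + l) % h) = c i) ∧
    ((∀ i < h, c ((i + l) % h) = c i) →
      (∑ i ∈ Finset.range h, c i * p ^ i) =
        (∑ j ∈ Finset.range k, p ^ (j * l)) * (∑ i ∈ Finset.range l, c i * p ^ i)) := by
  have hh0 : 0 < h := hh ▸ Nat.mul_pos hl hk
  have hlh : l ≤ h := by
    rw [hh]; exact Nat.le_mul_of_pos_right _ hk
  -- part 2
  have part2 : (∀ i < h, c ((i + l) % h) = c i) →
      (∑ i ∈ Finset.range h, c i * p ^ i) =
        (∑ j ∈ Finset.range k, p ^ (j * l)) * (∑ i ∈ Finset.range l, c i * p ^ i) := by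
    intro hshift
    have hper : ∀ j < k, ∀ i < l, c (j * l + i) = c i := by
      intro j
      induction j with
      | zero => intro _ i hi; simp
      | succ n ihn =>
        intro hjk i hi
        have e : (n + 1) * l = n * l + l := by ring
        have hx3 : (n + 1) * l + i < h := by
          rw [hh]
          calc (n + 1) * l + i < (n + 1) * l + l := by omega
            _ = (n + 2) * l := by ring
            _ ≤ k * l := Nat.mul_le_mul_right _ (by omega)
            _ = l * k := by ring
        have hx : n * l + i < h := by omega
        have hx2 : n * l + i + l < h := by omega
        have := hshift (n * l + i) hx
        rw [Nat.mod_eq_of_lt hx2] at this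
        have e : (n + 1) * l + i = n * l + i + l := by ring
        rw [e, this]
        exact ihn (by omega) i hi
    rw [hh]
    exact aux_prod p l c k hper
  refine ⟨⟨?_, fun hs => ⟨_, part2 hs⟩⟩, part2⟩
  -- forward direction
  intro hD
  set M := ∑ i ∈ Finset.range h, c i * p ^ i with hM
  set N := ∑ i ∈ Finset.range h, c ((i + l) % h) * p ^ i with hN
  set m := p ^ h - 1 with hm
  have hph1 : 1 ≤ p ^ h := Nat.one_le_pow _ _ (by omega)
  have hmone : p ^ h = m + 1 := by omega
  -- ZMod m facts
  have hcast : ((p : ZMod m)) ^ h = 1 := by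
    have : ((p ^ h : ℕ) : ZMod m) = ((m + 1 : ℕ) : ZMod m) := by rw [← hmone]
    push_cast at this
    rw [ZMod.natCast_self] at this
    simpa using this
  have hpowmod : ∀ a : ℕ, ((p : ZMod m)) ^ a = (p : ZMod m) ^ (a % h) := by
    intro a
    conv_lhs => rw [← Nat.div_add_mod a h]
    rw [pow_add, pow_mul, hcast, one_pow, one_mul]
  have hunit : IsUnit ((p : ZMod m) ^ l) := by
    have h1 : (p : ZMod m) * (p : ZMod m) ^ (h - 1) = 1 := by
      rw [← pow_succ', show h - 1 + 1 = h by omega, hcast]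
    exact (IsUnit.of_mul_eq_one _ h1).pow l
  -- M * p^l = M in ZMod m
  have hDM : ((∑ j ∈ Finset.range k, p ^ (j * l) : ℕ) : ZMod m) * ((p : ZMod m) ^ l - 1)
      = 0 := by
    push_cast
    have : ∀ j ∈ Finset.range k, (p : ZMod m) ^ (j * l) = ((p : ZMod m) ^ l) ^ j := by
      intro j _; rw [← pow_mul, mul_comm]
    rw [Finset.sum_congr rfl this, geom_sum_mul, ← pow_mul]
    rw [show l * k = h from hh.symm, hcast, sub_self]
  have hM1 : (M : ZMod m) * (p : ZMod m) ^ l = (M : ZMod m) := by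
    obtain ⟨t, ht⟩ := hD
    have : (M : ZMod m) = ((∑ j ∈ Finset.range k, p ^ (j * l) : ℕ) : ZMod m) * (t : ZMod m) := by
      rw [← Nat.cast_mul, ← ht]
    rw [this]
    have h2 : ((∑ j ∈ Finset.range k, p ^ (j * l) : ℕ) : ZMod m) * (t : ZMod m)
        * (p : ZMod m) ^ l - ((∑ j ∈ Finset.range k, p ^ (j * l) : ℕ) : ZMod m) * (t : ZMod m)
        = ((∑ j ∈ Finset.range k, p ^ (j * l) : ℕ) : ZMod m) * ((p : ZMod m) ^ l - 1)
          * (t : ZMod m) := by ring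
    rw [← sub_eq_zero, h2, hDM, zero_mul]
  -- N * p^l = M in ZMod m
  have hN1 : (N : ZMod m) * (p : ZMod m) ^ l = (M : ZMod m) := by
    rw [hN, hM]
    push_cast
    rw [Finset.sum_mul]
    have step : ∀ i ∈ Finset.range h,
        ((c ((i + l) % h) : ZMod m) * (p : ZMod m) ^ i) * (p : ZMod m) ^ l
        = (c ((i + l) % h) : ZMod m) * (p : ZMod m) ^ ((i + l) % h) := by
      intro i _
      rw [mul_assoc, ← pow_add, hpowmod (i + l)]
    rw [Finset.sum_congr rfl step]
    exact aux_shift h l hlh (fun j => (c j : ZMod m) * (p : ZMod m) ^ j)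
  -- hence N = M in ZMod m
  have hNM : (N : ZMod m) = (M : ZMod m) := by
    have heq : (p : ZMod m) ^ l * (N : ZMod m) = (p : ZMod m) ^ l * (M : ZMod m) := by
      rw [mul_comm _ (N : ZMod m), hN1, mul_comm _ (M : ZMod m), hM1]
    exact hunit.mul_left_cancel heq
  -- bounds
  have hMlt : M < m := aux_lt p h hp c hc hne
  have hNlt : N < m := by
    apply aux_lt p h hp _ (fun i hi => hc _ (Nat.mod_lt _ hh0))
    obtain ⟨i0, hi0, hne0⟩ := hne
    refine ⟨(i0 + (h - l)) % h, Nat.mod_lt _ hh0, ?_⟩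
    rw [Nat.mod_add_mod, show i0 + (h - l) + l = i0 + h by omega,
      Nat.add_mod_right, Nat.mod_eq_of_lt hi0]
    exact hne0
  -- N = M in ℕ
  have hNMnat : N = M := by
    have := (ZMod.natCast_eq_natCast_iff _ _ _).1 hNM
    have h2 := this
    unfold Nat.ModEq at h2
    rw [Nat.mod_eq_of_lt hNlt, Nat.mod_eq_of_lt hMlt] at h2
    exact h2
  -- conclude by digit uniqueness
  intro i hi
  exact aux_unique p hp h (fun i => c ((i + l) % h)) c
    (fun i hi => by
      show c ((i + l) % h) < p
      have := hc ((i + l) % h) (Nat.mod_lt _ hh0); omega)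
    (fun i hi => by have := hc i hi; omega)
    hNMnat i hi
end

section
/- Let d ≥ 1 and W ∈ ℤ, and for each i ∈ {1,…,d} let m_i, n_i be integers with m_i ≥ n_i, m_i < 0 and m_i + n_i = W. Suppose that for each i a pair (ℓ_i, p_i) of integers is chosen from the six-element list [(0, W), (1, n_i − m_i + 1), (2, 2), (2, 2), (3, m_i − n_i + 3), (4, −W + 4)]. If Σ_{i=1}^d ℓ_i ≤ d, then Σ_{i=1}^d p_i < 2d; in particular Σ_{i=1}^d p_i ≠ 2d. -/
/-- Let `d ≥ 1`, `W : ℤ`, and for each `i` let `m i ≥ n i`, `m i < 0`, `m i + n i = W`.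
Suppose for each `i` a pair `(ℓ i, P i)` is chosen from the six-element list
`[(0, W), (1, n i - m i + 1), (2, 2), (2, 2), (3, m i - n i + 3), (4, -W + 4)]`.
If `∑ ℓ i ≤ d` then `∑ P i < 2d`; in particular `∑ P i ≠ 2d`. -/
theorem stmt6 (d : ℕ) (hd : 1 ≤ d) (W : ℤ) (m n : Fin d → ℤ)
    (hdom : ∀ i, n i ≤ m i) (hneg : ∀ i, m i < 0) (hpur : ∀ i, m i + n i = W)
    (ℓ P : Fin d → ℤ)
    (hchoice : ∀ i, (ℓ i, P i) ∈
      ([(0, W), (1, n i - m i + 1), (2, 2), (2, 2), (3, m i - n i + 3), (4, -W + 4)] :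
        List (ℤ × ℤ)))
    (hlen : ∑ i, ℓ i ≤ (d : ℤ)) :
    (∑ i, P i < 2 * (d : ℤ)) ∧ (∑ i, P i ≠ 2 * (d : ℤ)) := by
  have i0 : Fin d := ⟨0, hd⟩
  have hW : W ≤ -2 := by
    have := hdom i0; have := hneg i0; have := hpur i0; omega
  have key : ∀ i, P i ≤ (1 - W) * ℓ i + W := by
    intro i
    have h := hchoice i
    have hd1 := hdom i; have hn1 := hneg i; have hp1 := hpur i
    simp only [List.mem_cons, List.not_mem_nil, or_false, Prod.mk.injEq] at h
    rcases h with ⟨h1, h2⟩ | ⟨h1, h2⟩ | ⟨h1, h2⟩ | ⟨h1, h2⟩ | ⟨h1, h2⟩ | ⟨h1, h2⟩ <;>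
      rw [h1, h2] <;> nlinarith [hW]
  have hsum : ∑ i, P i ≤ (1 - W) * ∑ i, ℓ i + d * W := by
    calc ∑ i, P i ≤ ∑ i, ((1 - W) * ℓ i + W) := Finset.sum_le_sum fun i _ => key i
    _ = (1 - W) * ∑ i, ℓ i + d * W := by
        rw [Finset.sum_add_distrib, ← Finset.mul_sum, Finset.sum_const]
        simp [mul_comm]
  have hmul : (1 - W) * ∑ i, ℓ i ≤ (1 - W) * d :=
    mul_le_mul_of_nonneg_left hlen (by linarith)
  have hlt : ∑ i, P i < 2 * (d : ℤ) := by
    have hd' : (1 : ℤ) ≤ d := by exact_mod_cast hd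
    nlinarith
  exact ⟨hlt, ne_of_lt hlt⟩
end
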